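/- Let X be a complex Hilbert space with conjugation J and associated spin norm N. Let x₁, z₁ ∈ X satisfy J(x₁) = x₁, J(z₁) = z₁, ‖x₁‖ = ‖z₁‖ = 1 (Hilbert norm) and ⟪x₁, z₁⟫ = 0. Then for every t ∈ [0,1], N( t·x₁ + (1−t)·(i·z₁) ) = 1. -/

import Mathlib

noncomputable section

open scoped ComplexConjugate

/-- The spin norm associated with a conjugation `J` on a complex Hilbert space. -/
def spinNorm {X : Type*} [NormedAddCommGroup X] [InnerProductSpace ℂ X]
    (J : X → X) (x : X) : ℝ :=
  Real.sqrt (‖x‖ ^ 2 + Real.sqrt (‖x‖ ^ 4 - ‖(inner ℂ x (J x) : ℂ)‖ ^ 2))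

/-- The segment between `x₁` and `i z₁`, for `x₁, z₁` orthonormal `J`-symmetric elements of a
spin factor, lies entirely in the unit sphere for the spin norm. -/
theorem spinNorm_segment_eq_one
    {X : Type*} [NormedAddCommGroup X] [InnerProductSpace ℂ X] [CompleteSpace X]
    (J : X → X)
    (hJadd : ∀ x y, J (x + y) = J x + J y)
    (hJsmul : ∀ (c : ℂ) (x : X), J (c • x) = conj c • J x)
    (hJinv : ∀ x, J (J x) = x)
    (hJinner : ∀ x y, (inner ℂ (J x) (J y) : ℂ) = inner ℂ y x)
    (x₁ z₁ : X) (h₁ : J x₁ = x₁) (h₂ : J z₁ = z₁)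
    (hx₁ : ‖x₁‖ = 1) (hz₁ : ‖z₁‖ = 1)
    (horth : (inner ℂ x₁ z₁ : ℂ) = 0)
    (t : ℝ) (ht : t ∈ Set.Icc (0 : ℝ) 1) :
    spinNorm J ((t : ℂ) • x₁ + ((1 - t : ℝ) : ℂ) • (Complex.I • z₁)) = 1 := by
  obtain ⟨ht0, ht1⟩ := ht
  set x : X := (t : ℂ) • x₁ + ((1 - t : ℝ) : ℂ) • (Complex.I • z₁) with hx
  have hxx : (inner ℂ x₁ x₁ : ℂ) = 1 := by
    rw [inner_self_eq_norm_sq_to_K, hx₁]; norm_num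
  have hzz : (inner ℂ z₁ z₁ : ℂ) = 1 := by
    rw [inner_self_eq_norm_sq_to_K, hz₁]; norm_num
  have hzx : (inner ℂ z₁ x₁ : ℂ) = 0 := by
    rw [inner_eq_zero_symm] at horth; exact horth
  have key : ∀ (a b c d : ℂ),
      (inner ℂ (a • x₁ + b • z₁) (c • x₁ + d • z₁) : ℂ) = conj a * c + conj b * d := by
    intro a b c d
    simp only [inner_add_left, inner_add_right, inner_smul_left, inner_smul_right,
      hxx, hzz, hzx, horth, mul_zero, mul_one, add_zero, zero_add]
    ring
  have e1 : x = (t : ℂ) • x₁ + (((1 - t : ℝ) : ℂ) * Complex.I) • z₁ := by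
    rw [hx, smul_smul]
  have e2 : J x = (t : ℂ) • x₁ + (-(((1 - t : ℝ) : ℂ) * Complex.I)) • z₁ := by
    rw [e1, hJadd, hJsmul, hJsmul, h₁, h₂]
    simp [Complex.conj_ofReal, Complex.conj_I, mul_comm]
  have hinner_xx : (inner ℂ x x : ℂ) = ((t ^ 2 + (1 - t) ^ 2 : ℝ) : ℂ) := by
    rw [e1, key]
    simp only [map_mul, Complex.conj_ofReal, Complex.conj_I]
    push_cast
    ring_nf
    simp [Complex.I_sq]
    ring
  have hinner_xJx : (inner ℂ x (J x) : ℂ) = ((t ^ 2 - (1 - t) ^ 2 : ℝ) : ℂ) := by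
    rw [e2]
    conv_lhs => rw [e1]
    rw [key]
    simp only [map_mul, Complex.conj_ofReal, Complex.conj_I]
    push_cast
    ring_nf
    simp [Complex.I_sq]
    ring
  have hnx : ‖x‖ ^ 2 = t ^ 2 + (1 - t) ^ 2 := by
    have h := norm_sq_eq_re_inner (𝕜 := ℂ) x
    rw [hinner_xx] at h
    simpa [← Complex.ofReal_one, ← Complex.ofReal_sub, ← Complex.ofReal_pow] using h
  have habs : ‖(inner ℂ x (J x) : ℂ)‖ ^ 2 = (t ^ 2 - (1 - t) ^ 2) ^ 2 := by
    rw [hinner_xJx, Complex.norm_real, Real.norm_eq_abs, sq_abs]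
  rw [spinNorm, habs]
  have h4 : ‖x‖ ^ 4 = (t ^ 2 + (1 - t) ^ 2) ^ 2 := by
    have h : ‖x‖ ^ 4 = (‖x‖ ^ 2) ^ 2 := by ring
    rw [h, hnx]
  rw [h4, hnx]
  have hkey : (t ^ 2 + (1 - t) ^ 2) ^ 2 - (t ^ 2 - (1 - t) ^ 2) ^ 2 = (2 * t * (1 - t)) ^ 2 := by
    ring
  rw [hkey, Real.sqrt_sq (by nlinarith)]
  have h1 : t ^ 2 + (1 - t) ^ 2 + 2 * t * (1 - t) = 1 := by ring
  rw [h1, Real.sqrt_one]
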